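/- Let m be a basic probability assignment on a finite nonempty set Θ which is not Bayesian, i.e., there exists A ⊆ Θ with |A| ≥ 2 and m(A) > 0. If there exists x ∈ Θ with m(x) = Pl(x) > 0, then the relative belief of singletons satisfies m(x)/k_Bel > Pl(x) and the relative plausibility of singletons satisfies Pl(x)/k_Pl < Bel({x}) = m(x); in particular both fall outside the probability interval [Bel(x), Pl(x)] for x. -/
import Mathlib


open Finset

/-- A basic probability assignment on a finite set `Θ`. -/
def IsBPA {Θ : Type*} [Fintype Θ] (m : Finset Θ → ℝ) : Prop :=
  m ∅ = 0 ∧ (∀ A, 0 ≤ m A) ∧ (∑ A : Finset Θ, m A) = 1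

/-- Belief function `Bel(A) = ∑_{B ⊆ A} m(B)`. -/
noncomputable def Bel {Θ : Type*} [Fintype Θ] [DecidableEq Θ] (m : Finset Θ → ℝ)
    (A : Finset Θ) : ℝ :=
  ∑ B ∈ A.powerset, m B

/-- Plausibility function `Pl(A) = ∑_{B ∩ A ≠ ∅} m(B)`. -/
noncomputable def Pl {Θ : Type*} [Fintype Θ] [DecidableEq Θ] (m : Finset Θ → ℝ)
    (A : Finset Θ) : ℝ :=
  ∑ B ∈ Finset.univ.filter (fun B => B ∩ A ≠ ∅), m B

/-- Total mass of singletons `k_Bel`. -/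
noncomputable def kBel {Θ : Type*} [Fintype Θ] (m : Finset Θ → ℝ) : ℝ :=
  ∑ x : Θ, m {x}

/-- Total plausibility of singletons `k_Pl`. -/
noncomputable def kPl {Θ : Type*} [Fintype Θ] [DecidableEq Θ] (m : Finset Θ → ℝ) : ℝ :=
  ∑ x : Θ, Pl m {x}

/-- `β[Bel] = (1 - k_Bel)/(k_Pl - k_Bel)`. -/
noncomputable def betaBel {Θ : Type*} [Fintype Θ] [DecidableEq Θ] (m : Finset Θ → ℝ) : ℝ :=
  (1 - kBel m) / (kPl m - kBel m)

/-- The intersection probability `p[Bel](x) = m(x) + β[Bel]⬝(Pl(x) - m(x))`. -/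
noncomputable def pInt {Θ : Type*} [Fintype Θ] [DecidableEq Θ] (m : Finset Θ → ℝ)
    (x : Θ) : ℝ :=
  m {x} + betaBel m * (Pl m {x} - m {x})

/-- for a non-Bayesian BPA `m`, if `m(x) = Pl(x) > 0` for some singleton `x`,
then the relative belief of singletons exceeds `Pl(x)` and the relative plausibility of
singletons is below `Bel({x}) = m(x)`: both fall outside the interval `[Bel(x), Pl(x)]`. -/
theorem relBel_relPl_outside_interval
    {Θ : Type*} [Fintype Θ] [DecidableEq Θ] [Nonempty Θ] (m : Finset Θ → ℝ)
    (hm : IsBPA m)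
    (hnonBayes : ∃ A : Finset Θ, 2 ≤ A.card ∧ 0 < m A)
    (x : Θ) (hx : m {x} = Pl m {x}) (hxpos : 0 < m {x}) :
    m {x} / kBel m > Pl m {x} ∧ Pl m {x} / kPl m < Bel m {x} ∧ Bel m {x} = m {x} := by

  obtain ⟨hempty, hnn, hsum⟩ := hm
  obtain ⟨A, hA2, hApos⟩ := hnonBayes
  -- Bel {x} = m {x}
  have hBel : Bel m {x} = m {x} := by
    have hp : ({x} : Finset Θ).powerset = {∅, {x}} := by
      ext B; simp [Finset.subset_singleton_iff]
    rw [Bel, hp, Finset.sum_pair]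
    · rw [hempty]; ring
    · intro h; exact absurd (congrArg Finset.card h) (by simp)
  -- kBel < 1
  have hkBel_lt : kBel m < 1 := by
    set S : Finset (Finset Θ) := Finset.univ.image (fun y : Θ => ({y} : Finset Θ)) with hS
    have hkBelS : kBel m = ∑ B ∈ S, m B := by
      rw [hS, Finset.sum_image]
      · rfl
      · intro a _ b _ h
        exact Finset.singleton_injective h
    have hAnot : A ∉ S := by
      intro h
      rw [hS, Finset.mem_image] at h
      obtain ⟨y, _, hy⟩ := h
      rw [← hy] at hA2
      simp at hA2
    have hle : ∑ B ∈ insert A S, m B ≤ ∑ B : Finset Θ, m B :=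
      Finset.sum_le_sum_of_subset_of_nonneg (Finset.subset_univ _)
        (fun B _ _ => hnn B)
    rw [Finset.sum_insert hAnot, hsum] at hle
    rw [hkBelS]
    linarith
  have hkBel_pos : 0 < kBel m := by
    have := Finset.single_le_sum (f := fun y : Θ => m {y})
      (fun y _ => hnn _) (Finset.mem_univ x)
    rw [kBel]; linarith
  -- kPl > 1
  have hkPl_eq : kPl m = ∑ B : Finset Θ, (B.card : ℝ) * m B := by
    rw [kPl]
    have : ∀ y : Θ, Pl m {y} = ∑ B : Finset Θ, if y ∈ B then m B else 0 := by
      intro y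
      rw [Pl, Finset.sum_filter]
      apply Finset.sum_congr rfl
      intro B _
      congr 1
      simp [Finset.inter_singleton_of_mem, Finset.eq_empty_iff_forall_notMem]
    simp_rw [this]
    rw [Finset.sum_comm]
    apply Finset.sum_congr rfl
    intro B _
    rw [Finset.sum_ite_mem, Finset.univ_inter, Finset.sum_const, nsmul_eq_mul]
  have hkPl_gt : 1 < kPl m := by
    have hf : ∀ B : Finset Θ, 0 ≤ ((B.card : ℝ) - 1) * m B := by
      intro B
      rcases eq_or_ne B ∅ with h | h
      · simp [h, hempty]
      · have : 1 ≤ B.card := Finset.card_pos.2 (Finset.nonempty_iff_ne_empty.2 h)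
        have : (1 : ℝ) ≤ B.card := by exact_mod_cast this
        have := hnn B
        nlinarith
    have hsingle : ((A.card : ℝ) - 1) * m A ≤ ∑ B : Finset Θ, ((B.card : ℝ) - 1) * m B :=
      Finset.single_le_sum (fun B _ => hf B) (Finset.mem_univ A)
    have hA2' : (2 : ℝ) ≤ A.card := by exact_mod_cast hA2
    have hsplit : ∑ B : Finset Θ, ((B.card : ℝ) - 1) * m B
        = (∑ B : Finset Θ, (B.card : ℝ) * m B) - ∑ B : Finset Θ, m B := by
      rw [← Finset.sum_sub_distrib]
      apply Finset.sum_congr rfl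
      intro B _; ring
    rw [hsplit, hsum] at hsingle
    rw [hkPl_eq]
    nlinarith
  refine ⟨?_, ?_, hBel⟩
  · rw [← hx, gt_iff_lt, lt_div_iff₀ hkBel_pos]
    nlinarith
  · rw [← hx, hBel, div_lt_iff₀ (by linarith)]
    nlinarith
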